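/- For a ring R and integer n ≥ 3, the ring D_n(R) of upper triangular n×n matrices with constant diagonal is i-reversible if and only if R has only trivial idempotents. -/

import Mathlib

/-- A ring is *i-reversible* if whenever `a * b` is a non-zero idempotent, `b * a` is an
idempotent. -/
def IsIReversible (S : Type*) [Ring S] : Prop :=
  ∀ a b : S, IsIdempotentElem (a * b) → a * b ≠ 0 → IsIdempotentElem (b * a)

/-- A ring is *reversible* if `a * b = 0` implies `b * a = 0`. -/
def IsReversible (S : Type*) [Ring S] : Prop :=
  ∀ a b : S, a * b = 0 → b * a = 0

/-- A ring has only trivial idempotents if its only idempotents are `0` and `1`. -/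
def HasOnlyTrivialIdempotents (S : Type*) [Ring S] : Prop :=
  ∀ e : S, IsIdempotentElem e → e = 0 ∨ e = 1

/-- Upper triangular predicate for square matrices. -/
def Matrix.IsUpperTri {n : ℕ} {R : Type*} [Zero R] (A : Matrix (Fin n) (Fin n) R) : Prop :=
  ∀ ⦃i j : Fin n⦄, j < i → A i j = 0

lemma Matrix.IsUpperTri.mul {n : ℕ} {R : Type*} [Ring R]
    {A B : Matrix (Fin n) (Fin n) R} (hA : A.IsUpperTri) (hB : B.IsUpperTri) :
    (A * B).IsUpperTri := by
  intro i j h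
  rw [Matrix.mul_apply]
  refine Finset.sum_eq_zero fun k _ => ?_
  rcases lt_or_ge k i with hk | hk
  · rw [hA hk, zero_mul]
  · rw [hB (lt_of_lt_of_le h hk), mul_zero]

/-- The ring `T_n(R)` of upper triangular `n × n` matrices, as a subring of the matrix ring. -/
def triangularRing (n : ℕ) (R : Type*) [Ring R] :
    Subring (Matrix (Fin n) (Fin n) R) where
  carrier := {A | A.IsUpperTri}
  mul_mem' ha hb := ha.mul hb
  one_mem' := fun i j h => by simp [Matrix.one_apply, (ne_of_lt h).symm]
  add_mem' ha hb := fun i j h => by simp [Matrix.add_apply, ha h, hb h]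
  zero_mem' := fun i j h => rfl
  neg_mem' ha := fun i j h => by simp [ha h]

lemma diag_mul_upperTri {n : ℕ} {R : Type*} [Ring R]
    {A B : Matrix (Fin n) (Fin n) R} (hA : A.IsUpperTri)
    (hB : B.IsUpperTri) (i : Fin n) : (A * B) i i = A i i * B i i := by
  rw [Matrix.mul_apply]
  refine Finset.sum_eq_single i (fun k _ hk => ?_) (by simp)
  rcases lt_or_gt_of_ne hk with h | h
  · rw [hA h, zero_mul]
  · rw [hB h, mul_zero]

/-- The ring `D_n(R)` of upper triangular `n × n` matrices with constant diagonal. -/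
def constDiagRing (n : ℕ) (R : Type*) [Ring R] :
    Subring (Matrix (Fin n) (Fin n) R) where
  carrier := {A | A.IsUpperTri ∧ ∀ i j : Fin n, A i i = A j j}
  mul_mem' := by
    rintro A B ⟨hA, hA'⟩ ⟨hB, hB'⟩
    refine ⟨hA.mul hB, fun i j => ?_⟩
    rw [diag_mul_upperTri hA hB, diag_mul_upperTri hA hB, hA' i j, hB' i j]
  one_mem' := ⟨fun i j h => by simp [Matrix.one_apply, (ne_of_lt h).symm], by simp⟩
  add_mem' := by
    rintro A B ⟨hA, hA'⟩ ⟨hB, hB'⟩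
    exact ⟨fun i j h => by simp [Matrix.add_apply, hA h, hB h],
      fun i j => by simp [Matrix.add_apply, hA' i j, hB' i j]⟩
  zero_mem' := ⟨fun i j h => rfl, by simp⟩
  neg_mem' := by
    rintro A ⟨hA, hA'⟩
    exact ⟨fun i j h => by simp [hA h], fun i j => by simp [hA' i j]⟩


section IRevHelpers

variable {n : ℕ} {R : Type*} [Ring R]

lemma diag_mul_std (d : Fin n → R) (i j : Fin n) (c : R) :
    Matrix.diagonal d * Matrix.single i j c =
      Matrix.single i j (d i * c) := by
  ext a b
  rw [Matrix.diagonal_mul]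
  by_cases h : i = a
  · subst h; by_cases h2 : j = b <;> simp [h2]
  · simp [h]

lemma std_mul_diag (d : Fin n → R) (i j : Fin n) (c : R) :
    Matrix.single i j c * Matrix.diagonal d =
      Matrix.single i j (c * d j) := by
  ext a b
  rw [Matrix.mul_diagonal]
  by_cases h : j = b
  · subst h; by_cases h2 : i = a <;> simp [h2]
  · simp [h]

lemma strictTri_pow_entry {N : Matrix (Fin n) (Fin n) R} (hN : N.IsUpperTri)
    (hdiag : ∀ i, N i i = 0) :
    ∀ k : ℕ, ∀ i j : Fin n, (j : ℕ) < (i : ℕ) + k → (N ^ k) i j = 0 := by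
  intro k
  induction k with
  | zero =>
    intro i j h
    have hij : i ≠ j := by rintro rfl; omega
    rw [pow_zero, Matrix.one_apply_ne hij]
  | succ k ih =>
    intro i j h
    rw [pow_succ, Matrix.mul_apply]
    refine Finset.sum_eq_zero fun l _ => ?_
    rcases lt_or_ge (l : ℕ) ((i : ℕ) + k) with hl | hl
    · rw [ih i l hl, zero_mul]
    · rcases eq_or_lt_of_le (show (j : ℕ) ≤ (l : ℕ) by omega) with hjl | hjl
      · have : j = l := Fin.ext hjl
        rw [this, hdiag, mul_zero]
      · rw [hN (show j < l from hjl), mul_zero]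

lemma strictTri_pow_eq_zero {N : Matrix (Fin n) (Fin n) R} (hN : N.IsUpperTri)
    (hdiag : ∀ i, N i i = 0) : N ^ n = 0 := by
  ext i j
  rw [strictTri_pow_entry hN hdiag n i j (by omega)]
  rfl

lemma idem_pow {S : Type*} [Monoid S] {x : S} (h : x * x = x) :
    ∀ k : ℕ, x ^ (k + 1) = x := by
  intro k
  induction k with
  | zero => rw [pow_one]
  | succ k ih => rw [pow_succ, ih, h]

end IRevHelpers

/-- For `n ≥ 3`, the ring `D_n(R)` is i-reversible if and only if `R` has only trivial
idempotents. -/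
theorem constDiagRing_isIReversible_iff (R : Type*) [Ring R] (n : ℕ) (hn : 3 ≤ n) :
    IsIReversible (constDiagRing n R) ↔ HasOnlyTrivialIdempotents R := by
  constructor
  · -- i-reversible ⇒ only trivial idempotents
    intro hrev e he
    by_contra hcon
    push_neg at hcon
    obtain ⟨he0, he1⟩ := hcon
    have hee : e * e = e := he
    set f : R := 1 - e with hf
    have hef : e * f = 0 := by rw [hf, mul_sub, mul_one, hee, sub_self]
    have hfe : f * e = 0 := by rw [hf, sub_mul, one_mul, hee, sub_self]
    have hff : f * f = f := by
      rw [hf, sub_mul, one_mul, mul_sub, mul_one, hee, sub_self, sub_zero]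
    have hfne : f ≠ 0 := fun h0 => he1 ((sub_eq_zero.mp h0).symm)
    set i0 : Fin n := ⟨0, by omega⟩ with hi0
    set i1 : Fin n := ⟨1, by omega⟩ with hi1
    set i2 : Fin n := ⟨2, by omega⟩ with hi2
    have h01 : i0 ≠ i1 := by simp [hi0, hi1, Fin.ext_iff]
    have h12 : i1 ≠ i2 := by simp [hi1, hi2, Fin.ext_iff]
    have h02 : i0 ≠ i2 := by simp [hi0, hi2, Fin.ext_iff]
    set D : Matrix (Fin n) (Fin n) R := Matrix.diagonal (fun _ => e) with hD
    have hDD : D * D = D := by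
      rw [hD, Matrix.diagonal_mul_diagonal]
      simp only [hee]
    have hDmem : D ∈ constDiagRing n R := by
      constructor
      · intro i j h
        exact Matrix.diagonal_apply_ne _ (ne_of_gt h)
      · intro i j
        simp [hD]
    have hstdmem : ∀ (a b : Fin n), (a : ℕ) < (b : ℕ) → ∀ c : R,
        Matrix.single a b c ∈ constDiagRing n R := by
      intro a b hab c
      constructor
      · intro i j h
        apply Matrix.single_apply_of_ne
        rintro ⟨rfl, rfl⟩
        rw [Fin.lt_def] at h
        omega
      · intro i j
        have hi : (Matrix.single a b c) i i = 0 := by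
          apply Matrix.single_apply_of_ne
          rintro ⟨rfl, rfl⟩
          omega
        have hj : (Matrix.single a b c) j j = 0 := by
          apply Matrix.single_apply_of_ne
          rintro ⟨rfl, rfl⟩
          omega
        rw [hi, hj]
    set A : Matrix (Fin n) (Fin n) R := D + Matrix.single i1 i2 f with hA
    set B : Matrix (Fin n) (Fin n) R := D + Matrix.single i0 i1 f with hB
    have hAmem : A ∈ constDiagRing n R :=
      (constDiagRing n R).add_mem hDmem (hstdmem i1 i2 (by simp [hi1, hi2]) f)
    have hBmem : B ∈ constDiagRing n R :=
      (constDiagRing n R).add_mem hDmem (hstdmem i0 i1 (by simp [hi0, hi1]) f)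
    have hAB : A * B = D := by
      rw [hA, hB, add_mul, mul_add, mul_add, hDD,
        diag_mul_std, std_mul_diag,
        Matrix.single_mul_single_of_ne (c := f) i1 i2 i0 (Ne.symm h02) f, hef, hfe,
        Matrix.single_zero, Matrix.single_zero]
      simp
    have hBA : B * A = D + Matrix.single i0 i2 f := by
      rw [hB, hA, add_mul, mul_add, mul_add, hDD,
        diag_mul_std, std_mul_diag,
        Matrix.single_mul_single_same, hef, hfe, hff,
        Matrix.single_zero, Matrix.single_zero]
      simp
    set 𝕒 : constDiagRing n R := ⟨A, hAmem⟩ with h𝕒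
    set 𝕓 : constDiagRing n R := ⟨B, hBmem⟩ with h𝕓
    have hidem : IsIdempotentElem (𝕒 * 𝕓) := by
      apply Subtype.ext
      show (A * B) * (A * B) = A * B
      rw [hAB, hDD]
    have hne : 𝕒 * 𝕓 ≠ 0 := by
      intro h0
      have : A * B = 0 := congrArg Subtype.val h0
      rw [hAB] at this
      apply he0
      have := congrFun (congrFun this i0) i0
      rwa [hD, Matrix.diagonal_apply_eq] at this
    have := hrev 𝕒 𝕓 hidem hne
    have hBAidem : (B * A) * (B * A) = B * A := congrArg Subtype.val this
    rw [hBA] at hBAidem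
    have hsq : (D + Matrix.single i0 i2 f) * (D + Matrix.single i0 i2 f) = D := by
      rw [add_mul, mul_add, mul_add, hDD,
        diag_mul_std, std_mul_diag,
        Matrix.single_mul_single_of_ne (c := f) i0 i2 i0 (Ne.symm h02) f, hef, hfe,
        Matrix.single_zero]
      simp
    rw [hsq] at hBAidem
    have : Matrix.single i0 i2 f = 0 := by
      have := hBAidem.symm
      rwa [add_eq_left] at this
    apply hfne
    have := congrFun (congrFun this i0) i2
    rwa [Matrix.single_apply_same] at this
  · -- only trivial idempotents ⇒ i-reversible
    intro htriv 𝕒 𝕓 hidem hne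
    set a : Matrix (Fin n) (Fin n) R := 𝕒.1 with ha
    set b : Matrix (Fin n) (Fin n) R := 𝕓.1 with hb
    set E : Matrix (Fin n) (Fin n) R := a * b with hE
    have hidem' : E * E = E := congrArg Subtype.val hidem
    have hupper : E.IsUpperTri := (𝕒 * 𝕓).2.1
    have hdiag : ∀ i j : Fin n, E i i = E j j := (𝕒 * 𝕓).2.2
    set i0 : Fin n := ⟨0, by omega⟩ with hi0
    set e : R := E i0 i0 with he
    have heidem : e * e = e := by
      rw [he, ← diag_mul_upperTri hupper hupper i0]
      exact congrFun (congrFun hidem' i0) i0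
    rcases htriv e heidem with h0 | h1
    · -- e = 0 : contradiction with AB ≠ 0
      exfalso
      have hdz : ∀ i, E i i = 0 := fun i => by rw [hdiag i i0, ← he, h0]
      have hEn : E ^ n = 0 := strictTri_pow_eq_zero hupper hdz
      have : E = 0 := by
        have h1 := idem_pow hidem' (n - 1)
        rw [show n - 1 + 1 = n by omega, hEn] at h1
        exact h1.symm
      exact hne (Subtype.ext this)
    · -- e = 1 : AB = 1, so BA is idempotent
      have hdo : ∀ i, E i i = 1 := fun i => by rw [hdiag i i0, ← he, h1]
      set N : Matrix (Fin n) (Fin n) R := E - 1 with hN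
      have hNupper : N.IsUpperTri := by
        intro i j h
        rw [hN, Matrix.sub_apply, hupper h, Matrix.one_apply_ne (ne_of_gt h), sub_zero]
      have hNdiag : ∀ i, N i i = 0 := fun i => by
        rw [hN, Matrix.sub_apply, hdo i, Matrix.one_apply_eq, sub_self]
      have hMidem : (-N) * (-N) = -N := by
        have hnn : N * N = -N := by
          rw [hN, sub_mul, one_mul, mul_sub, mul_one, hidem']
          abel
        rw [neg_mul_neg, hnn]
      have hMzero : -N = 0 := by
        have h1 := idem_pow hMidem (n - 1)
        rw [show n - 1 + 1 = n by omega, strictTri_pow_eq_zero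
          (by intro i j h; simp [hNupper h]) (fun i => by simp [hNdiag i])] at h1
        exact h1.symm
      have hE1 : E = 1 := by
        have : N = 0 := by simpa using hMzero
        rw [← sub_eq_zero, ← hN, this]
      have hab1 : 𝕒 * 𝕓 = 1 := Subtype.ext hE1
      show 𝕓 * 𝕒 * (𝕓 * 𝕒) = 𝕓 * 𝕒
      rw [mul_assoc, ← mul_assoc 𝕒 𝕓 𝕒, hab1, one_mul]
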